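/- Consider a GWO stagnation process with horizon T ≥ 2, guiding positions p₁, p₂, p₃, center c = (p₁ + p₂ + p₃)/3, and step sizes a(t) = 2(1 - t/T), and assume that X(1) is integrable. Then for every natural number t with 2 ≤ t ≤ T, X(t) is integrable and E[X(t)] = c. In particular the sequence of expectations E[X(t)] is eventually constant, so its limit exists (order-1 stability). -/

import Mathlib

open MeasureTheory ProbabilityTheory Set

/-- The GWO step sizes `a(t) = 2 (1 - t/T)`. -/
noncomputable def gwoStep (T t : ℕ) : ℝ := 2 * (1 - (t : ℝ) / (T : ℝ))

lemma aux_ae_mem {Ω : Type*} [MeasurableSpace Ω] (P : Measure Ω) (f : Ω → ℝ)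
    (hf : Measurable f) (s : Set ℝ) (hs : MeasurableSet s)
    (h : Measure.map f P = (volume s)⁻¹ • volume.restrict s) :
    ∀ᵐ ω ∂P, f ω ∈ s := by
  rw [ae_iff]
  have : {ω | ¬ f ω ∈ s} = f ⁻¹' sᶜ := rfl
  rw [this, ← Measure.map_apply hf hs.compl, h]
  simp [Measure.restrict_apply hs.compl]

lemma aux_integral_symm (a : ℝ) (ha : 0 < a) :
    ∫ x, x ∂((volume (Icc (-a) a))⁻¹ • volume.restrict (Icc (-a) a)) = 0 := by
  rw [integral_smul_measure]
  have h : ∫ x in Icc (-a) a, x = 0 := by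
    rw [integral_Icc_eq_integral_Ioc, ← intervalIntegral.integral_of_le (by linarith)]
    rw [integral_id]
    ring
  rw [h]; simp

/-- A GWO stagnation process with horizon `T`, guiding positions
`p 0, p 1, p 2` and step sizes `a(t) = 2 (1 - t/T)`: random positions `X t`
and random coefficients `A t k ~ U[-a(t), a(t)]`, `C t k ~ U[0, 2]` such that
for each `t` the seven random variables `X t, A t k, C t k` are mutually
independent and the GWO update equation holds pointwise. -/
structure GWOStagnationProcess {Ω : Type*} [MeasurableSpace Ω] (P : Measure Ω)
    (T : ℕ) (p : Fin 3 → ℝ) where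
  X : ℕ → Ω → ℝ
  A : ℕ → Fin 3 → Ω → ℝ
  C : ℕ → Fin 3 → Ω → ℝ
  measX : ∀ t, Measurable (X t)
  measA : ∀ t k, Measurable (A t k)
  measC : ∀ t k, Measurable (C t k)
  lawA : ∀ t, 1 ≤ t → t ≤ T - 1 → ∀ k,
    Measure.map (A t k) P
      = (volume (Icc (-(gwoStep T t)) (gwoStep T t)))⁻¹ •
          volume.restrict (Icc (-(gwoStep T t)) (gwoStep T t))
  lawC : ∀ t, 1 ≤ t → t ≤ T - 1 → ∀ k,
    Measure.map (C t k) P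
      = (volume (Icc (0:ℝ) 2))⁻¹ • volume.restrict (Icc (0:ℝ) 2)
  indep : ∀ t, 1 ≤ t → t ≤ T - 1 →
    iIndepFun (m := fun _ : Fin 7 => (inferInstance : MeasurableSpace ℝ))
      ![X t, A t 0, A t 1, A t 2, C t 0, C t 1, C t 2] P
  update : ∀ t, 1 ≤ t → t ≤ T - 1 → ∀ ω,
    X (t + 1) ω
      = (1/3 : ℝ) * ∑ k : Fin 3, (p k + A t k ω * |C t k ω * p k - X t ω|)

lemma gwo_step_aux {Ω : Type*} [MeasurableSpace Ω] (P : Measure Ω) [IsProbabilityMeasure P]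
    (T : ℕ) (hT : 2 ≤ T) (p : Fin 3 → ℝ) (proc : GWOStagnationProcess P T p)
    (t : ℕ) (ht1 : 1 ≤ t) (ht : t ≤ T - 1) (hint : Integrable (proc.X t) P) :
    Integrable (proc.X (t+1)) P ∧
    ∫ ω, proc.X (t+1) ω ∂P = (p 0 + p 1 + p 2) / 3 := by
  set a := gwoStep T t with ha_def
  have hTpos : (0:ℝ) < (T:ℝ) := by
    exact_mod_cast Nat.lt_of_lt_of_le (by norm_num) hT
  have htT : t < T := lt_of_le_of_lt ht (Nat.sub_lt (by omega) (by omega))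
  have ha : 0 < a := by
    have : (t:ℝ) < (T:ℝ) := by exact_mod_cast htT
    have := (div_lt_one hTpos).mpr this
    rw [ha_def, gwoStep]; linarith
  have ha2 : a ≤ 2 := by
    have : 0 ≤ (t:ℝ) / (T:ℝ) := by positivity
    rw [ha_def, gwoStep]; linarith
  -- a.e. bounds
  have hA_ae : ∀ k : Fin 3, ∀ᵐ ω ∂P, proc.A t k ω ∈ Icc (-a) a := fun k =>
    aux_ae_mem P _ (proc.measA t k) _ measurableSet_Icc (proc.lawA t ht1 ht k)
  have hC_ae : ∀ k : Fin 3, ∀ᵐ ω ∂P, proc.C t k ω ∈ Icc (0:ℝ) 2 := fun k =>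
    aux_ae_mem P _ (proc.measC t k) _ measurableSet_Icc (proc.lawC t ht1 ht k)
  -- mean of A is zero
  have hEA : ∀ k : Fin 3, ∫ ω, proc.A t k ω ∂P = 0 := by
    intro k
    have : ∫ ω, proc.A t k ω ∂P = ∫ x, x ∂(Measure.map (proc.A t k) P) :=
      (integral_map (proc.measA t k).aemeasurable aestronglyMeasurable_id).symm
    rw [this, proc.lawA t ht1 ht k]
    exact aux_integral_symm a ha
  -- measurability of the modulus terms
  set g : Fin 3 → Ω → ℝ := fun k ω => |proc.C t k ω * p k - proc.X t ω| with hg_def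
  have hg_meas : ∀ k, Measurable (g k) := fun k =>
    (((proc.measC t k).mul_const (p k)).sub (proc.measX t)).abs
  -- independence of A k and g k
  have hmeas7 : ∀ i : Fin 7, Measurable
      (![proc.X t, proc.A t 0, proc.A t 1, proc.A t 2,
         proc.C t 0, proc.C t 1, proc.C t 2] i) := by
    intro i
    fin_cases i <;>
      simp only [Matrix.cons_val_zero, Matrix.cons_val_one, Matrix.head_cons,
        Matrix.cons_val_succ] <;>
      first
        | exact proc.measX t
        | exact proc.measA t _
        | exact proc.measC t _
  have hphi : ∀ k : Fin 3, Measurable (fun q : ℝ × ℝ => |q.1 * p k - q.2|) := fun k =>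
    ((measurable_fst.mul_const (p k)).sub measurable_snd).abs
  have hindep : ∀ k : Fin 3, IndepFun (proc.A t k) (g k) P := by
    intro k
    have key : IndepFun (fun ω => (proc.C t k ω, proc.X t ω)) (proc.A t k) P := by
      have H := proc.indep t ht1 ht
      fin_cases k
      · simpa using H.indepFun_prodMk hmeas7 4 0 1 (by decide) (by decide)
      · simpa using H.indepFun_prodMk hmeas7 5 0 2 (by decide) (by decide)
      · simpa using H.indepFun_prodMk hmeas7 6 0 3 (by decide) (by decide)
    have := (key.comp (hphi k) measurable_id).symm
    simpa [hg_def, Function.comp_def] using this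
  -- integrability of products
  have hprod_int : ∀ k : Fin 3,
      Integrable (fun ω => proc.A t k ω * g k ω) P := by
    intro k
    have hdom : Integrable (fun ω => 2 * (2 * |p k| + |proc.X t ω|)) P :=
      ((integrable_const _).add hint.abs).const_mul 2
    refine hdom.mono ((proc.measA t k).mul (hg_meas k)).aestronglyMeasurable ?_
    filter_upwards [hA_ae k, hC_ae k] with ω hA hC
    have hAb : |proc.A t k ω| ≤ 2 := by
      rw [abs_le]; constructor <;> [linarith [hA.1]; linarith [hA.2]]
    have hCb : |proc.C t k ω| ≤ 2 := by
      rw [abs_le]; constructor <;> [linarith [hC.1]; linarith [hC.2]]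
    have hgb : g k ω ≤ 2 * |p k| + |proc.X t ω| := by
      rw [hg_def]
      calc |proc.C t k ω * p k - proc.X t ω|
          ≤ |proc.C t k ω * p k| + |proc.X t ω| := abs_sub _ _
        _ = |proc.C t k ω| * |p k| + |proc.X t ω| := by rw [abs_mul]
        _ ≤ 2 * |p k| + |proc.X t ω| := by
            have := abs_nonneg (p k)
            nlinarith
    have hg0 : 0 ≤ g k ω := abs_nonneg _
    rw [norm_mul, Real.norm_eq_abs, Real.norm_eq_abs, abs_abs,
      Real.norm_eq_abs]
    have h2 : 2 * |p k| + |proc.X t ω| ≥ 0 := by positivity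
    calc |proc.A t k ω| * g k ω ≤ 2 * g k ω := by nlinarith
      _ ≤ 2 * (2 * |p k| + |proc.X t ω|) := by nlinarith
      _ ≤ |2 * (2 * |p k| + |proc.X t ω|)| := le_abs_self _
    -- done
  have hprod_zero : ∀ k : Fin 3, ∫ ω, proc.A t k ω * g k ω ∂P = 0 := by
    intro k
    have := (hindep k).integral_mul_eq_mul_integral (proc.measA t k).aestronglyMeasurable
      (hg_meas k).aestronglyMeasurable
    have heq : ∫ ω, proc.A t k ω * g k ω ∂P
        = (∫ ω, proc.A t k ω ∂P) * ∫ ω, g k ω ∂P := this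
    rw [heq, hEA k, zero_mul]
  -- the update as a function identity
  have hXeq : proc.X (t+1)
      = fun ω => (1/3 : ℝ) * ∑ k : Fin 3, (p k + proc.A t k ω * g k ω) :=
    funext (proc.update t ht1 ht)
  have hterm_int : ∀ k : Fin 3,
      Integrable (fun ω => p k + proc.A t k ω * g k ω) P := fun k =>
    (integrable_const _).add (hprod_int k)
  have hint1 : Integrable (proc.X (t+1)) P := by
    rw [hXeq]
    exact (integrable_finset_sum Finset.univ fun k _ => hterm_int k).const_mul _
  refine ⟨hint1, ?_⟩
  rw [hXeq]
  rw [integral_const_mul, integral_finset_sum Finset.univ fun k _ => hterm_int k]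
  have hterm : ∀ k : Fin 3,
      ∫ ω, (p k + proc.A t k ω * g k ω) ∂P = p k := by
    intro k
    rw [integral_add (integrable_const _) (hprod_int k), hprod_zero k, integral_const]
    simp
  simp only [hterm]
  rw [Fin.sum_univ_three]
  ring

/-- Proposition 3.4 of the paper (order-1 stability of the GWO under the
stagnation assumption): if the initial position is integrable, then at every
iteration `2 ≤ t ≤ T` the position `X t` is integrable with expectation
exactly `c = (p 0 + p 1 + p 2) / 3`. -/
theorem gwo_order_one_stability
    {Ω : Type*} [MeasurableSpace Ω] (P : Measure Ω) [IsProbabilityMeasure P]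
    (T : ℕ) (hT : 2 ≤ T) (p : Fin 3 → ℝ)
    (proc : GWOStagnationProcess P T p)
    (c : ℝ) (hc : c = (p 0 + p 1 + p 2) / 3)
    (hinit : Integrable (proc.X 1) P) :
    ∀ t : ℕ, 2 ≤ t → t ≤ T →
      Integrable (proc.X t) P ∧ ∫ ω, proc.X t ω ∂P = c := by
  have key : ∀ s : ℕ, 1 ≤ s → s ≤ T →
      Integrable (proc.X s) P ∧ (2 ≤ s → ∫ ω, proc.X s ω ∂P = c) := by
    intro s
    induction s with
    | zero => intro h1 _; omega
    | succ n ih =>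
      intro _ h2
      rcases Nat.eq_zero_or_pos n with hn | hn
      · subst hn; exact ⟨hinit, by omega⟩
      · have hnT : n ≤ T - 1 := by omega
        have ihn := ih hn (by omega)
        have step := gwo_step_aux P T hT p proc n hn hnT ihn.1
        exact ⟨step.1, fun _ => by rw [step.2, hc]⟩
  intro t ht2 htT
  exact ⟨(key t (by omega) htT).1, (key t (by omega) htT).2 ht2⟩
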